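/- Let G be a finite non-prime graph with |V(G)| ≥ 4 such that every module of G that is a clique or a stable set has cardinality at most 1 (i.e., m(G) = 1). Then G admits a prime extension obtained by adding a single vertex, i.e., p(G) = 1. -/

import Mathlib

/-- `M` is a module of `G`: every vertex outside `M` is adjacent to all of `M` or to none. -/
def IsModule {V : Type*} (G : SimpleGraph V) (M : Set V) : Prop :=
  ∀ v ∉ M, (∀ m ∈ M, G.Adj v m) ∨ (∀ m ∈ M, ¬ G.Adj v m)

/-- `G` is prime: at least 4 vertices and only trivial modules. -/
def IsPrimeGraph {V : Type*} (G : SimpleGraph V) : Prop :=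
  4 ≤ Nat.card V ∧ ∀ M : Set V, IsModule G M → M = Set.univ ∨ M.Subsingleton

/-- `M` is a clique: all distinct vertices of `M` are adjacent. -/
def IsCliqueSet {V : Type*} (G : SimpleGraph V) (M : Set V) : Prop :=
  ∀ a ∈ M, ∀ b ∈ M, a ≠ b → G.Adj a b

/-- `M` is a stable (independent) set. -/
def IsStableSet {V : Type*} (G : SimpleGraph V) (M : Set V) : Prop :=
  ∀ a ∈ M, ∀ b ∈ M, ¬ G.Adj a b

/-- `G` admits a prime extension obtained by adding exactly `p` new vertices. -/
def HasPrimeExt {V : Type*} (G : SimpleGraph V) (p : ℕ) : Prop :=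
  ∃ H : SimpleGraph (V ⊕ Fin p),
    (∀ a b : V, H.Adj (Sum.inl a) (Sum.inl b) ↔ G.Adj a b) ∧ IsPrimeGraph H

/-- The prime bound `p(G)`: the least number of added vertices in a prime extension. -/
noncomputable def primeBound {V : Type*} (G : SimpleGraph V) : ℕ :=
  sInf {p : ℕ | HasPrimeExt G p}

/-- `m(G)`: the largest cardinality of a module of `G` that is a clique or a stable set. -/
noncomputable def modCliqueStab {V : Type*} (G : SimpleGraph V) : ℕ :=
  sSup {n : ℕ | ∃ M : Set V, IsModule G M ∧ (IsCliqueSet G M ∨ IsStableSet G M) ∧ M.ncard = n}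


section Aux
variable {V : Type*} (G : SimpleGraph V)

/-- A nontrivial module. -/
def NontrivMod (M : Set V) : Prop := IsModule G M ∧ M.Nontrivial ∧ M ≠ Set.univ

/-- A minimal nontrivial module. -/
def Mini (F : Set V) : Prop := NontrivMod G F ∧ ∀ M, NontrivMod G M → M ⊆ F → M = F

variable {G}

lemma mod_pair {M : Set V} (hM : IsModule G M) {v a b : V} (hv : v ∉ M) (ha : a ∈ M)
    (hb : b ∈ M) : G.Adj v a ↔ G.Adj v b := by
  rcases hM v hv with h | h
  · simp [h a ha, h b hb]
  · simp [h a ha, h b hb]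
lemma inter_module {M N : Set V} (hM : IsModule G M) (hN : IsModule G N) :
    IsModule G (M ∩ N) := by
  intro v hv
  by_cases hvM : v ∈ M
  · have hvN : v ∉ N := fun h => hv ⟨hvM, h⟩
    rcases hN v hvN with h | h
    · exact Or.inl fun m hm => h m hm.2
    · exact Or.inr fun m hm => h m hm.2
  · rcases hM v hvM with h | h
    · exact Or.inl fun m hm => h m hm.1
    · exact Or.inr fun m hm => h m hm.1
lemma three_of_nontriv
    (hm : ∀ M : Set V, IsModule G M → (IsCliqueSet G M ∨ IsStableSet G M) → M.ncard ≤ 1)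
    {M : Set V} (h : NontrivMod G M) :
    ∃ a ∈ M, ∃ b ∈ M, ∃ c ∈ M, a ≠ b ∧ a ≠ c ∧ b ≠ c := by
  obtain ⟨a, ha, b, hb, hab⟩ := h.2.1
  by_contra hc
  push_neg at hc
  have hsub : M = {a, b} := by
    apply Set.eq_of_subset_of_subset _ (by
      intro x hx
      rcases hx with rfl | rfl
      exacts [ha, hb])
    intro c hcM
    by_contra hcn
    simp only [Set.mem_insert_iff, Set.mem_singleton_iff, not_or] at hcn
    exact hcn.2 (hc a ha b hb c hcM hab (Ne.symm hcn.1)).symm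
  have hcl : IsCliqueSet G M ∨ IsStableSet G M := by
    by_cases hadj : G.Adj a b
    · left
      intro p hp q hq hpq
      rw [hsub] at hp hq
      rcases hp with rfl | rfl <;> rcases hq with rfl | rfl <;>
        first | exact absurd rfl hpq | exact hadj | exact hadj.symm
    · right
      intro p hp q hq
      rw [hsub] at hp hq
      rcases hp with rfl | rfl <;> rcases hq with rfl | rfl <;>
        first | exact G.irrefl | exact hadj | exact fun h => hadj h.symm
  have := hm M h.1 hcl
  rw [hsub, Set.ncard_pair hab] at this
  omega

lemma exists_mini [Finite V] {M : Set V} (h : NontrivMod G M) :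
    ∃ F, Mini G F ∧ F ⊆ M := by
  have hwf : ∀ n : ℕ, ∀ M : Set V, NontrivMod G M → M.ncard = n → ∃ F, Mini G F ∧ F ⊆ M := by
    intro n
    induction n using Nat.strong_induction_on with
    | _ n ih =>
      intro M hM hn
      by_cases hex : ∃ M', NontrivMod G M' ∧ M' ⊆ M ∧ M' ≠ M
      · obtain ⟨M', hM', hsub, hne⟩ := hex
        have hlt : M'.ncard < M.ncard :=
          Set.ncard_lt_ncard (HasSubset.Subset.ssubset_of_ne hsub hne) M.toFinite
        obtain ⟨F, hF, hFs⟩ := ih M'.ncard (hn ▸ hlt) M' hM' rfl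
        exact ⟨F, hF, hFs.trans hsub⟩
      · push_neg at hex
        exact ⟨M, ⟨hM, fun M' hM' hsub => hex M' hM' hsub⟩, subset_rfl⟩
  exact hwf M.ncard M h rfl
/-- helper: a minimal module cannot be a 3-element set `{a,b,c}` where `c` is
uniform towards `{a,b}`. -/
lemma pair_helper {F : Set V} {a b c : V} (hF : Mini G F) (hFeq : F = {a, b, c})
    (hab : a ≠ b) (hac : a ≠ c) (hbc : b ≠ c) (hiff : G.Adj c a ↔ G.Adj c b) : False := by
  have hmod : IsModule G {a, b} := by
    intro v hv
    simp only [Set.mem_insert_iff, Set.mem_singleton_iff, not_or] at hv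
    by_cases hvF : v ∈ F
    · have hvc : v = c := by
        rw [hFeq] at hvF
        rcases hvF with rfl | rfl | rfl
        · exact absurd rfl hv.1
        · exact absurd rfl hv.2
        · rfl
      subst hvc
      by_cases hca : G.Adj v a
      · refine Or.inl fun m hm' => ?_
        rcases hm' with rfl | rfl
        · exact hca
        · exact hiff.mp hca
      · refine Or.inr fun m hm' h => ?_
        rcases hm' with rfl | rfl
        · exact hca h
        · exact hca (hiff.mpr h)
    · rcases hF.1.1 v hvF with h | h
      · refine Or.inl fun m hm' => h m ?_
        rw [hFeq]; rcases hm' with rfl | rfl <;> simp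
      · refine Or.inr fun m hm' => h m ?_
        rw [hFeq]; rcases hm' with rfl | rfl <;> simp
  have hnt : NontrivMod G {a, b} := by
    refine ⟨hmod, ⟨a, by simp, b, by simp, hab⟩, fun hEq => ?_⟩
    have : c ∈ ({a, b} : Set V) := by rw [hEq]; trivial
    rcases this with rfl | rfl
    · exact hac rfl
    · exact hbc rfl
  have heq : ({a, b} : Set V) = F := hF.2 _ hnt (by rw [hFeq]; intro z hz; rcases hz with rfl | rfl <;> simp)
  have : c ∈ ({a, b} : Set V) := by rw [heq, hFeq]; simp
  rcases this with rfl | rfl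
  · exact hac rfl
  · exact hbc rfl

lemma four_of_mini
    (hm : ∀ M : Set V, IsModule G M → (IsCliqueSet G M ∨ IsStableSet G M) → M.ncard ≤ 1)
    {F : Set V} (hF : Mini G F) :
    ∃ a ∈ F, ∃ b ∈ F, ∃ c ∈ F, ∃ d ∈ F,
      a ≠ b ∧ a ≠ c ∧ a ≠ d ∧ b ≠ c ∧ b ≠ d ∧ c ≠ d := by
  obtain ⟨a, ha, b, hb, c, hc, hab, hac, hbc⟩ := three_of_nontriv hm hF.1
  by_cases hd : ∃ d ∈ F, d ≠ a ∧ d ≠ b ∧ d ≠ c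
  · obtain ⟨d, hdF, hda, hdb, hdc⟩ := hd
    exact ⟨a, ha, b, hb, c, hc, d, hdF, hab, hac, Ne.symm hda, hbc, Ne.symm hdb, Ne.symm hdc⟩
  · exfalso
    push_neg at hd
    have hFeq : F = {a, b, c} := by
      apply Set.eq_of_subset_of_subset
      · intro z hz
        by_cases h1 : z = a
        · simp [h1]
        by_cases h2 : z = b
        · simp [h2]
        simp [hd z hz h1 h2]
      · intro z hz
        rcases hz with rfl | rfl | rfl <;> assumption
    by_cases e1 : G.Adj c a ↔ G.Adj c b
    · exact pair_helper hF hFeq hab hac hbc e1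
    by_cases e2 : G.Adj b a ↔ G.Adj b c
    · refine pair_helper hF (a := a) (b := c) (c := b) ?_ hac hab (Ne.symm hbc) e2
      rw [hFeq]; ext z; simp; tauto
    by_cases e3 : G.Adj a b ↔ G.Adj a c
    · refine pair_helper hF (a := b) (b := c) (c := a) ?_ hbc (Ne.symm hab) (Ne.symm hac) e3
      rw [hFeq]; ext z; simp; tauto
    · rw [G.adj_comm c a, G.adj_comm c b] at e1
      rw [G.adj_comm b a, G.adj_comm b c] at e2
      tauto
lemma arith_pow {n : ℕ} (hn : 4 ≤ n) : 2 + (n + n) < 2 ^ n := by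
  induction n with
  | zero => omega
  | succ k ih =>
    rcases Nat.lt_or_ge k 4 with hk | hk
    · interval_cases k <;> simp_all
    · have := ih hk
      have h2 : 2 ≤ 2 ^ k := Nat.one_lt_two_pow_iff.mpr (by omega)
      rw [pow_succ]
      omega

lemma exists_T [Finite V]
    (hm : ∀ M : Set V, IsModule G M → (IsCliqueSet G M ∨ IsStableSet G M) → M.ncard ≤ 1)
    {F : Set V} (hF : Mini G F) :
    ∃ T : Set V, T ⊆ F ∧ T.Nonempty ∧ (F \ T).Nonempty ∧
      ∀ x ∈ F, ∃ u ∈ F, u ≠ x ∧ ¬(u ∈ T ↔ G.Adj x u) := by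
  classical
  haveI := Fintype.ofFinite V
  set Fs : Finset V := F.toFinset with hFsdef
  have hmemFs : ∀ z : V, z ∈ Fs ↔ z ∈ F := by intro z; simp [hFsdef]
  obtain ⟨a, ha, b, hb, c, hc, d, hd, hab, hac, had, hbc, hbd, hcd⟩ := four_of_mini hm hF
  have h4 : 4 ≤ Fs.card := by
    have hsub : ({a, b, c, d} : Finset V) ⊆ Fs := by
      intro z hz
      simp only [Finset.mem_insert, Finset.mem_singleton] at hz
      rcases hz with rfl | rfl | rfl | rfl <;> rw [hmemFs] <;> assumption
    have hcard : ({a, b, c, d} : Finset V).card = 4 := by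
      rw [Finset.card_insert_of_notMem (by simp [hab, hac, had]),
        Finset.card_insert_of_notMem (by simp [hbc, hbd]),
        Finset.card_insert_of_notMem (by simp [hcd]), Finset.card_singleton]
    calc 4 = ({a, b, c, d} : Finset V).card := hcard.symm
    _ ≤ Fs.card := Finset.card_le_card hsub
  set nb : V → Finset V := fun x => Fs.filter (fun u => G.Adj x u) with hnb
  set bad : Finset (Finset V) :=
    insert ∅ (insert Fs ((Fs.image nb) ∪ (Fs.image (fun x => insert x (nb x))))) with hbad
  have hbadcard : bad.card ≤ 2 + (Fs.card + Fs.card) := by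
    calc bad.card ≤ (insert Fs ((Fs.image nb) ∪ (Fs.image (fun x => insert x (nb x))))).card + 1 :=
        Finset.card_insert_le _ _
    _ ≤ ((Fs.image nb) ∪ (Fs.image (fun x => insert x (nb x)))).card + 1 + 1 := by
        have := Finset.card_insert_le Fs ((Fs.image nb) ∪ (Fs.image (fun x => insert x (nb x))))
        omega
    _ ≤ ((Fs.image nb).card + (Fs.image (fun x => insert x (nb x))).card) + 1 + 1 := by
        have := Finset.card_union_le (Fs.image nb) (Fs.image (fun x => insert x (nb x)))
        omega
    _ ≤ 2 + (Fs.card + Fs.card) := by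
        have h1 := Finset.card_image_le (s := Fs) (f := nb)
        have h2 := Finset.card_image_le (s := Fs) (f := fun x => insert x (nb x))
        omega
  have hex : ∃ Ts : Finset V, Ts ∈ Fs.powerset ∧ Ts ∉ bad := by
    by_contra hcon
    push_neg at hcon
    have hsub : Fs.powerset ⊆ bad := fun Ts hTs => hcon Ts hTs
    have := Finset.card_le_card hsub
    rw [Finset.card_powerset] at this
    have := arith_pow h4
    omega
  obtain ⟨Ts, hTsp, hTsb⟩ := hex
  have hTsub : Ts ⊆ Fs := Finset.mem_powerset.mp hTsp
  refine ⟨(Ts : Set V), ?_, ?_, ?_, ?_⟩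
  · intro z hz
    exact (hmemFs z).mp (hTsub hz)
  · have hne : Ts ≠ ∅ := fun h => hTsb (by rw [hbad, h]; simp)
    obtain ⟨z, hz⟩ := Finset.nonempty_iff_ne_empty.mpr hne
    exact ⟨z, hz⟩
  · have hne : Ts ≠ Fs := fun h => hTsb (by rw [hbad, h]; simp)
    obtain ⟨z, hzF, hzT⟩ := Finset.exists_of_ssubset (HasSubset.Subset.ssubset_of_ne hTsub hne)
    exact ⟨z, (hmemFs z).mp hzF, hzT⟩
  · intro x hx
    by_contra hcon
    push_neg at hcon
    have hall : ∀ u ∈ Fs, u ≠ x → (u ∈ Ts ↔ G.Adj x u) := by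
      intro u hu hux
      have := hcon u ((hmemFs u).mp hu) hux
      simpa using this
    by_cases hxT : x ∈ Ts
    · have : Ts = insert x (nb x) := by
        apply Finset.ext
        intro u
        by_cases hux : u = x
        · subst hux; simp [hxT]
        · simp only [Finset.mem_insert, hnb, Finset.mem_filter]
          constructor
          · intro hu
            exact Or.inr ⟨hTsub hu, (hall u (hTsub hu) hux).mp hu⟩
          · rintro (h | ⟨huF, hadj⟩)
            · exact absurd h hux
            · exact (hall u huF hux).mpr hadj
      exact hTsb (by
        rw [hbad]
        simp only [Finset.mem_insert, Finset.mem_union, Finset.mem_image]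
        exact Or.inr (Or.inr (Or.inr ⟨x, (hmemFs x).mpr hx, this.symm⟩)))
    · have : Ts = nb x := by
        apply Finset.ext
        intro u
        by_cases hux : u = x
        · subst hux
          simp [hxT, hnb, G.loopless]
        · simp only [hnb, Finset.mem_filter]
          constructor
          · intro hu
            exact ⟨hTsub hu, (hall u (hTsub hu) hux).mp hu⟩
          · rintro ⟨huF, hadj⟩
            exact (hall u huF hux).mpr hadj
      exact hTsb (by
        rw [hbad]
        simp only [Finset.mem_insert, Finset.mem_union, Finset.mem_image]
        exact Or.inr (Or.inr (Or.inl ⟨x, (hmemFs x).mpr hx, this.symm⟩)))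
lemma no_overlap
    (hm : ∀ M : Set V, IsModule G M → (IsCliqueSet G M ∨ IsStableSet G M) → M.ncard ≤ 1)
    {F M : Set V} (hF : Mini G F) (hM : NontrivMod G M) :
    F ⊆ M ∨ F ∩ M = ∅ := by
  by_contra hcon
  push_neg at hcon
  obtain ⟨hns, hne⟩ := hcon
  obtain ⟨x, hxF, hxM⟩ := Set.not_subset.mp hns
  obtain ⟨y, hyF, hyM⟩ := hne
  by_cases hMF : M ⊆ F
  · have : M = F := hF.2 M hM hMF
    exact hxM (this ▸ hxF)
  obtain ⟨u', hu'M, hu'F⟩ := Set.not_subset.mp hMF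
  have hmod : IsModule G (F \ M) := by
    intro v hv
    by_cases hvF : v ∈ F
    · have hvM : v ∈ M := by
        by_contra h
        exact hv ⟨hvF, h⟩
      have key : ∀ w ∈ F \ M, (G.Adj v w ↔ G.Adj v x) := by
        intro w hw
        have h1 : G.Adj w v ↔ G.Adj w u' := mod_pair hM.1 hw.2 hvM hu'M
        have h2 : G.Adj u' w ↔ G.Adj u' x := mod_pair hF.1.1 hu'F hw.1 hxF
        have h3 : G.Adj x v ↔ G.Adj x u' := mod_pair hM.1 hxM hvM hu'M
        rw [G.adj_comm v w, G.adj_comm v x, h1, G.adj_comm w u', h2, h3, G.adj_comm u' x]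
      by_cases hvx : G.Adj v x
      · exact Or.inl fun m hm' => (key m hm').mpr hvx
      · exact Or.inr fun m hm' h => hvx ((key m hm').mp h)
    · rcases hF.1.1 v hvF with h | h
      · exact Or.inl fun m hm' => h m hm'.1
      · exact Or.inr fun m hm' => h m hm'.1
  by_cases hnt : (F \ M).Nontrivial
  · have hnm : NontrivMod G (F \ M) :=
      ⟨hmod, hnt, fun hEq => (by rw [hEq]; trivial : y ∈ F \ M).2 hyM⟩
    have heq : F \ M = F := hF.2 _ hnm Set.diff_subset
    have hy2 : y ∈ F \ M := by rw [heq]; exact hyF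
    exact hy2.2 hyM
  · rw [Set.not_nontrivial_iff] at hnt
    have hsing : ∀ z ∈ F, z ≠ x → z ∈ M := by
      intro z hzF hzx
      by_contra h
      exact hzx (hnt ⟨hzF, h⟩ ⟨hxF, hxM⟩)
    obtain ⟨a, ha, b, hb, c, hc, hab, hac, hbc⟩ := three_of_nontriv hm hF.1
    have hFM : NontrivMod G (F ∩ M) := by
      refine ⟨inter_module hF.1.1 hM.1, ?_, fun hEq => ?_⟩
      swap
      · have : x ∈ F ∩ M := by rw [hEq]; trivial
        exact hxM this.2
      by_cases hax : a = x
      · exact ⟨b, ⟨hb, hsing b hb (fun h => hab (hax.trans h.symm))⟩,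
          c, ⟨hc, hsing c hc (fun h => hac (hax.trans h.symm))⟩, hbc⟩
      · by_cases hbx : b = x
        · exact ⟨a, ⟨ha, hsing a ha hax⟩,
            c, ⟨hc, hsing c hc (fun h => hbc (hbx.trans h.symm))⟩, hac⟩
        · exact ⟨a, ⟨ha, hsing a ha hax⟩, b, ⟨hb, hsing b hb hbx⟩, hab⟩
    have heq : F ∩ M = F := hF.2 _ hFM Set.inter_subset_left
    have hx2 : x ∈ F ∩ M := by rw [heq]; exact hxF
    exact hxM hx2.2
lemma exists_S [Finite V]
    (hm : ∀ M : Set V, IsModule G M → (IsCliqueSet G M ∨ IsStableSet G M) → M.ncard ≤ 1)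
    {M0 : Set V} (hM0 : NontrivMod G M0) :
    ∃ S : Set V,
      (∀ M, NontrivMod G M → (∃ a ∈ M, a ∈ S) ∧ (∃ b ∈ M, b ∉ S)) ∧
      (∀ x : V, ∃ u, u ≠ x ∧ ¬(u ∈ S ↔ G.Adj u x)) ∧
      (∀ M, NontrivMod G M → ∃ u, u ∉ M ∧
        ((u ∈ S ∧ ∀ m ∈ M, ¬G.Adj u m) ∨ (u ∉ S ∧ ∀ m ∈ M, G.Adj u m))) := by
  classical
  have hTfun : ∀ F : Set V, ∃ T : Set V, Mini G F →
      (T ⊆ F ∧ T.Nonempty ∧ (F \ T).Nonempty ∧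
        ∀ x ∈ F, ∃ u ∈ F, u ≠ x ∧ ¬(u ∈ T ↔ G.Adj x u)) := by
    intro F
    by_cases h : Mini G F
    · exact (exists_T hm h).imp fun T hT => fun _ => hT
    · exact ⟨∅, fun h' => absurd h' h⟩
  choose T hT using hTfun
  obtain ⟨F0, hF0, -⟩ := exists_mini hM0
  obtain ⟨f0, hf0⟩ := hF0.1.2.1.nonempty
  set S : Set V :=
    {v | (∃ F, Mini G F ∧ v ∈ T F) ∨ ((∀ F, Mini G F → v ∉ F) ∧ ¬G.Adj v f0)} with hS
  have hdisj : ∀ F F', Mini G F → Mini G F' → F ≠ F' → F ∩ F' = ∅ := by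
    intro F F' hF hF' hne
    rcases no_overlap hm hF hF'.1 with h | h
    · exact absurd (hF'.2 F hF.1 h) hne
    · exact h
  have hmemS_min : ∀ F, Mini G F → ∀ v ∈ F, (v ∈ S ↔ v ∈ T F) := by
    intro F hF v hv
    constructor
    · rintro (⟨F', hF', hvT⟩ | ⟨hall, -⟩)
      · have hvF' : v ∈ F' := (hT F' hF').1 hvT
        by_cases he : F' = F
        · exact he ▸ hvT
        · exfalso
          have : v ∈ F' ∩ F := ⟨hvF', hv⟩
          rw [hdisj F' F hF' hF he] at this
          exact this
      · exact absurd hv (hall F hF)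
    · intro h
      exact Or.inl ⟨F, hF, h⟩
  have hmemS_R : ∀ v, (∀ F, Mini G F → v ∉ F) → (v ∈ S ↔ ¬G.Adj v f0) := by
    intro v hall
    constructor
    · rintro (⟨F', hF', hvT⟩ | ⟨-, h⟩)
      · exact absurd ((hT F' hF').1 hvT) (hall F' hF')
      · exact h
    · intro h
      exact Or.inr ⟨hall, h⟩
  refine ⟨S, ?_, ?_, ?_⟩
  · -- property C
    intro M hM
    obtain ⟨F, hF, hFM⟩ := exists_mini hM
    obtain ⟨a, haT⟩ := (hT F hF).2.1
    obtain ⟨b, hbF, hbT⟩ := (hT F hF).2.2.1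
    have haF : a ∈ F := (hT F hF).1 haT
    constructor
    · exact ⟨a, hFM haF, (hmemS_min F hF a haF).mpr haT⟩
    · exact ⟨b, hFM hbF, fun h => hbT ((hmemS_min F hF b hbF).mp h)⟩
  · -- property B
    intro x
    by_cases hx : ∃ F, Mini G F ∧ x ∈ F
    · obtain ⟨F, hF, hxF⟩ := hx
      obtain ⟨u, huF, hux, hne⟩ := (hT F hF).2.2.2 x hxF
      refine ⟨u, hux, ?_⟩
      rw [hmemS_min F hF u huF, G.adj_comm u x]
      exact hne
    · push_neg at hx
      have hxF0 : x ∉ F0 := hx F0 hF0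
      rcases hF0.1.1 x hxF0 with hadj | hnadj
      · obtain ⟨u, huF0, huT⟩ := (hT F0 hF0).2.2.1
        refine ⟨u, fun h => hxF0 (h ▸ huF0), fun hiff => ?_⟩
        exact huT ((hmemS_min F0 hF0 u huF0).mp (hiff.mpr (hadj u huF0).symm))
      · obtain ⟨u, huT⟩ := (hT F0 hF0).2.1
        have huF0 : u ∈ F0 := (hT F0 hF0).1 huT
        refine ⟨u, fun h => hxF0 (h ▸ huF0), fun hiff => ?_⟩
        exact hnadj u huF0 (hiff.mp ((hmemS_min F0 hF0 u huF0).mpr huT)).symm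
  · -- property D
    intro M hM
    by_cases hc : ∃ F, Mini G F ∧ F ∩ M = ∅
    · obtain ⟨F, hF, hFM⟩ := hc
      obtain ⟨m0, hm0⟩ := hM.2.1.nonempty
      have hdisjFM : ∀ v, v ∈ F → v ∉ M := by
        intro v hvF hvM
        have : v ∈ F ∩ M := ⟨hvF, hvM⟩
        rw [hFM] at this
        exact this
      have hm0F : m0 ∉ F := fun h => hdisjFM m0 h hm0
      rcases hF.1.1 m0 hm0F with hadj | hnadj
      · -- every vertex of F is adjacent to all of M
        have key : ∀ v ∈ F, ∀ m ∈ M, G.Adj v m := by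
          intro v hvF m hmM
          rw [mod_pair hM.1 (hdisjFM v hvF) hmM hm0]
          exact (hadj v hvF).symm
        obtain ⟨u, huF, huT⟩ := (hT F hF).2.2.1
        exact ⟨u, hdisjFM u huF,
          Or.inr ⟨fun h => huT ((hmemS_min F hF u huF).mp h), key u huF⟩⟩
      · have key : ∀ v ∈ F, ∀ m ∈ M, ¬G.Adj v m := by
          intro v hvF m hmM
          rw [mod_pair hM.1 (hdisjFM v hvF) hmM hm0]
          exact fun h => hnadj v hvF h.symm
        obtain ⟨u, huT⟩ := (hT F hF).2.1
        have huF : u ∈ F := (hT F hF).1 huT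
        exact ⟨u, hdisjFM u huF,
          Or.inl ⟨(hmemS_min F hF u huF).mpr huT, key u huF⟩⟩
    · push_neg at hc
      have hsub : ∀ F, Mini G F → F ⊆ M := by
        intro F hF
        rcases no_overlap hm hF hM with h | h
        · exact h
        · exact absurd h (Set.nonempty_iff_ne_empty.mp (hc F hF))
      obtain ⟨u, hu⟩ := Set.ne_univ_iff_exists_notMem M |>.mp hM.2.2
      have huR : ∀ F, Mini G F → u ∉ F := fun F hF h => hu (hsub F hF h)
      have huS := hmemS_R u huR
      have hf0M : f0 ∈ M := hsub F0 hF0 hf0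
      rcases hM.1 u hu with hadj | hnadj
      · refine ⟨u, hu, Or.inr ⟨fun h => (huS.mp h) (hadj f0 hf0M), hadj⟩⟩
      · exact ⟨u, hu, Or.inl ⟨huS.mpr (hnadj f0 hf0M), hnadj⟩⟩
end Aux

def extGraph {V : Type*} (G : SimpleGraph V) (S : Set V) : SimpleGraph (V ⊕ Fin 1) where
  Adj x y := match x, y with
    | Sum.inl a, Sum.inl b => G.Adj a b
    | Sum.inl a, Sum.inr _ => a ∈ S
    | Sum.inr _, Sum.inl b => b ∈ S
    | Sum.inr _, Sum.inr _ => False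
  symm := by
    constructor
    rintro (a | i) (b | j) h
    · exact G.adj_symm h
    · exact h
    · exact h
    · exact h.elim
  loopless := by
    constructor
    rintro (a | i) h
    · exact G.irrefl h
    · exact h

section Main
variable {V : Type*} {G : SimpleGraph V} {S : Set V}

@[simp] lemma extGraph_adj_inl_inl (a b : V) :
    (extGraph G S).Adj (Sum.inl a) (Sum.inl b) ↔ G.Adj a b := Iff.rfl
@[simp] lemma extGraph_adj_inl_inr (a : V) (i : Fin 1) :
    (extGraph G S).Adj (Sum.inl a) (Sum.inr i) ↔ a ∈ S := Iff.rfl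
@[simp] lemma extGraph_adj_inr_inl (i : Fin 1) (b : V) :
    (extGraph G S).Adj (Sum.inr i) (Sum.inl b) ↔ b ∈ S := Iff.rfl

lemma ext_prime [Finite V] (h4 : 4 ≤ Nat.card V)
    (hA : (∃ a, a ∈ S) ∧ (∃ b, b ∉ S))
    (hC : ∀ M, NontrivMod G M → (∃ a ∈ M, a ∈ S) ∧ (∃ b ∈ M, b ∉ S))
    (hB : ∀ x : V, ∃ u, u ≠ x ∧ ¬(u ∈ S ↔ G.Adj u x))
    (hD : ∀ M, NontrivMod G M → ∃ u, u ∉ M ∧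
      ((u ∈ S ∧ ∀ m ∈ M, ¬G.Adj u m) ∨ (u ∉ S ∧ ∀ m ∈ M, G.Adj u m))) :
    IsPrimeGraph (extGraph G S) := by
  constructor
  · have : Nat.card (V ⊕ Fin 1) = Nat.card V + 1 := by simp [Nat.card_sum]
    omega
  intro N hN
  set w : V ⊕ Fin 1 := Sum.inr 0 with hw_def
  have hcases : ∀ z : V ⊕ Fin 1, (∃ a, z = Sum.inl a) ∨ z = w := by
    rintro (a | i)
    · exact Or.inl ⟨a, rfl⟩
    · exact Or.inr (by rw [hw_def, Subsingleton.elim i 0])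
  set M : Set V := Sum.inl ⁻¹' N with hM_def
  have hmemM : ∀ a : V, a ∈ M ↔ Sum.inl a ∈ N := fun a => Iff.rfl
  -- M is always a module of G
  have hMmod : IsModule G M := by
    intro v hv
    have hvN : Sum.inl v ∉ N := fun h => hv ((hmemM v).mpr h)
    rcases hN (Sum.inl v) hvN with h | h
    · exact Or.inl fun m hm => (extGraph_adj_inl_inl v m).mp (h (Sum.inl m) ((hmemM m).mp hm))
    · exact Or.inr fun m hm => fun hadj => h (Sum.inl m) ((hmemM m).mp hm) hadj
  by_cases hw : w ∈ N
  · -- the new vertex is in N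
    by_cases hMuniv : M = Set.univ
    · left
      apply Set.eq_univ_iff_forall.mpr
      intro z
      rcases hcases z with ⟨a, rfl⟩ | rfl
      · exact (hmemM a).mp (hMuniv ▸ Set.mem_univ a)
      · exact hw
    by_cases hMnt : M.Nontrivial
    · exfalso
      obtain ⟨u, huM, hcase⟩ := hD M ⟨hMmod, hMnt, hMuniv⟩
      have huN : Sum.inl u ∉ N := fun h => huM ((hmemM u).mpr h)
      obtain ⟨m1, hm1⟩ := hMnt.nonempty
      rcases hN (Sum.inl u) huN with h | h
      · rcases hcase with ⟨huS, hnadj⟩ | ⟨huS, _⟩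
        · exact hnadj m1 hm1 (h (Sum.inl m1) ((hmemM m1).mp hm1))
        · exact huS (h w hw)
      · rcases hcase with ⟨huS, _⟩ | ⟨huS, hadj⟩
        · exact h w hw huS
        · exact h (Sum.inl m1) ((hmemM m1).mp hm1) (hadj m1 hm1)
    · -- M is a subsingleton
      rw [Set.not_nontrivial_iff] at hMnt
      rcases Set.eq_empty_or_nonempty M with hMe | ⟨x, hx⟩
      · right
        intro z1 h1 z2 h2
        have hz : ∀ z ∈ N, z = w := by
          intro z hz
          rcases hcases z with ⟨a, rfl⟩ | rfl
          · exact absurd ((hmemM a).mpr hz) (hMe ▸ Set.notMem_empty a)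
          · rfl
        rw [hz z1 h1, hz z2 h2]
      · exfalso
        obtain ⟨u, hux, hne⟩ := hB x
        have huM : u ∉ M := fun h => hux (hMnt h hx)
        have huN : Sum.inl u ∉ N := fun h => huM ((hmemM u).mpr h)
        rcases hN (Sum.inl u) huN with h | h
        · exact hne (iff_of_true (h w hw) (h (Sum.inl x) ((hmemM x).mp hx)))
        · exact hne (iff_of_false (fun hS => h w hw hS)
            (fun hadj => h (Sum.inl x) ((hmemM x).mp hx) hadj))
  · -- the new vertex is not in N
    by_cases hMnt : M.Nontrivial
    · exfalso
      by_cases hMuniv : M = Set.univ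
      · rcases hN w hw with h | h
        · obtain ⟨b, hb⟩ := hA.2
          exact hb (h (Sum.inl b) ((hmemM b).mp (hMuniv ▸ Set.mem_univ b)))
        · obtain ⟨a, ha⟩ := hA.1
          exact h (Sum.inl a) ((hmemM a).mp (hMuniv ▸ Set.mem_univ a)) ha
      · obtain ⟨⟨a, haM, haS⟩, ⟨b, hbM, hbS⟩⟩ := hC M ⟨hMmod, hMnt, hMuniv⟩
        rcases hN w hw with h | h
        · exact hbS (h (Sum.inl b) ((hmemM b).mp hbM))
        · exact h (Sum.inl a) ((hmemM a).mp haM) haS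
    · right
      rw [Set.not_nontrivial_iff] at hMnt
      intro z1 h1 z2 h2
      obtain ⟨a1, rfl⟩ := (hcases z1).resolve_right (fun h => hw (h ▸ h1))
      obtain ⟨a2, rfl⟩ := (hcases z2).resolve_right (fun h => hw (h ▸ h2))
      rw [hMnt ((hmemM a1).mpr h1) ((hmemM a2).mpr h2)]
end Main

theorem prime_bound_one {V : Type*} [Finite V] (G : SimpleGraph V)
    (hnp : ¬ IsPrimeGraph G) (h4 : 4 ≤ Nat.card V)
    (hm : ∀ M : Set V, IsModule G M →
      (IsCliqueSet G M ∨ IsStableSet G M) → M.ncard ≤ 1) :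
    HasPrimeExt G 1 ∧ primeBound G = 1 := by
  classical
  have hnall : ¬ ∀ M : Set V, IsModule G M → (M = Set.univ ∨ M.Subsingleton) :=
    fun h => hnp ⟨h4, h⟩
  push_neg at hnall
  obtain ⟨M0, hM0mod, hM0u, hM0ss⟩ := hnall
  have hM0 : NontrivMod G M0 := ⟨hM0mod, hM0ss, hM0u⟩
  obtain ⟨S, hC, hB, hD⟩ := exists_S hm hM0
  have hA : (∃ a, a ∈ S) ∧ (∃ b, b ∉ S) := by
    obtain ⟨⟨a, _, haS⟩, ⟨b, _, hbS⟩⟩ := hC M0 hM0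
    exact ⟨⟨a, haS⟩, ⟨b, hbS⟩⟩
  have hext : HasPrimeExt G 1 :=
    ⟨extGraph G S, fun a b => Iff.rfl, ext_prime h4 hA hC hB hD⟩
  refine ⟨hext, ?_⟩
  have h0 : ¬ HasPrimeExt G 0 := by
    rintro ⟨H0, hadj, hprime⟩
    have hNmod : IsModule H0 (Sum.inl '' M0) := by
      rintro (u | i) hv
      · have huM0 : u ∉ M0 := fun h => hv ⟨u, h, rfl⟩
        rcases hM0mod u huM0 with h | h
        · refine Or.inl ?_
          rintro m ⟨a, haM, rfl⟩
          exact (hadj u a).mpr (h a haM)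
        · refine Or.inr ?_
          rintro m ⟨a, haM, rfl⟩
          exact fun hh => h a haM ((hadj u a).mp hh)
      · exact i.elim0
    rcases hprime.2 _ hNmod with h | h
    · apply hM0u
      apply Set.eq_univ_iff_forall.mpr
      intro a
      have : Sum.inl a ∈ Sum.inl '' M0 := h ▸ Set.mem_univ _
      obtain ⟨b, hbM, hb⟩ := this
      exact (Sum.inl.inj hb) ▸ hbM
    · obtain ⟨x, hx, y, hy, hxy⟩ := hM0ss
      exact hxy (Sum.inl.inj (h ⟨x, hx, rfl⟩ ⟨y, hy, rfl⟩))
  have hmem : (1 : ℕ) ∈ {p : ℕ | HasPrimeExt G p} := hext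
  have hle : primeBound G ≤ 1 := Nat.sInf_le hmem
  have hsmem := Nat.sInf_mem (⟨1, hmem⟩ : Set.Nonempty {p : ℕ | HasPrimeExt G p})
  rcases Nat.eq_zero_or_pos (primeBound G) with hz | hp
  · rw [primeBound] at hz
    rw [hz] at hsmem
    exact absurd hsmem h0
  · unfold primeBound at hle hp ⊢
    omega
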